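/- Let Q = {d : d⁻ ≤ d ≤ d⁺} be a box of disturbance vectors contained in D = [-ξ,ξ]^{Γ²}. Then the union ⋃_{d∈Q} P(d,E) equals the set {x ∈ ℝ^n : -(Σ_{j∈N_i} d⁺_{ij})/|N_i| - ξ ≤ (Σ_{j∈N_i} x_j)/|N_i| - x_i ≤ -(Σ_{j∈N_i} d⁻_{ij})/|N_i| + ξ for all i ∈ Γ}. -/

import Mathlib

/-- the union of the polyhedra P(d,E) over a box Q = [d⁻,d⁺] ⊆ D equals
the explicit polyhedron with bounds given by d⁺ and d⁻. -/
theorem union_P_over_box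
    (n : ℕ) (G : SimpleGraph (Fin n)) [DecidableRel G.Adj]
    (hconn : G.Connected) (hN : ∀ i, (G.neighborFinset i).Nonempty)
    (ξ : ℝ) (hξ : 0 < ξ) (dm dp : Fin n → Fin n → ℝ)
    (hdm : ∀ i j, -ξ ≤ dm i j ∧ dm i j ≤ ξ)
    (hdp : ∀ i j, -ξ ≤ dp i j ∧ dp i j ≤ ξ)
    (hle : ∀ i j, dm i j ≤ dp i j) :
    (⋃ d ∈ {d : Fin n → Fin n → ℝ | ∀ i j, dm i j ≤ d i j ∧ d i j ≤ dp i j},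
        {x : Fin n → ℝ | ∀ i : Fin n,
          -(∑ j ∈ G.neighborFinset i, d i j) / ((G.neighborFinset i).card : ℝ) - ξ ≤
            (∑ j ∈ G.neighborFinset i, x j) / ((G.neighborFinset i).card : ℝ) - x i ∧
          (∑ j ∈ G.neighborFinset i, x j) / ((G.neighborFinset i).card : ℝ) - x i ≤
            -(∑ j ∈ G.neighborFinset i, d i j) / ((G.neighborFinset i).card : ℝ) + ξ})
      = {x : Fin n → ℝ | ∀ i : Fin n,
          -(∑ j ∈ G.neighborFinset i, dp i j) / ((G.neighborFinset i).card : ℝ) - ξ ≤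
            (∑ j ∈ G.neighborFinset i, x j) / ((G.neighborFinset i).card : ℝ) - x i ∧
          (∑ j ∈ G.neighborFinset i, x j) / ((G.neighborFinset i).card : ℝ) - x i ≤
            -(∑ j ∈ G.neighborFinset i, dm i j) / ((G.neighborFinset i).card : ℝ) + ξ} := by
  have hc : ∀ i : Fin n, (0 : ℝ) < ((G.neighborFinset i).card : ℝ) := by
    intro i
    exact_mod_cast Finset.card_pos.mpr (hN i)
  ext x
  simp only [Set.mem_iUnion, Set.mem_setOf_eq]
  constructor
  · rintro ⟨d, hd, hx⟩ i
    obtain ⟨h1, h2⟩ := hx i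
    have hsm : ∑ j ∈ G.neighborFinset i, dm i j ≤ ∑ j ∈ G.neighborFinset i, d i j :=
      Finset.sum_le_sum fun j _ => (hd i j).1
    have hsp : ∑ j ∈ G.neighborFinset i, d i j ≤ ∑ j ∈ G.neighborFinset i, dp i j :=
      Finset.sum_le_sum fun j _ => (hd i j).2
    have hci := hc i
    constructor
    · have : -(∑ j ∈ G.neighborFinset i, dp i j) / ((G.neighborFinset i).card : ℝ) ≤
          -(∑ j ∈ G.neighborFinset i, d i j) / ((G.neighborFinset i).card : ℝ) := by
        apply div_le_div_of_nonneg_right ?_ hci.le |>.trans_eq rfl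
        linarith
      linarith
    · have : -(∑ j ∈ G.neighborFinset i, d i j) / ((G.neighborFinset i).card : ℝ) ≤
          -(∑ j ∈ G.neighborFinset i, dm i j) / ((G.neighborFinset i).card : ℝ) := by
        apply div_le_div_of_nonneg_right ?_ hci.le |>.trans_eq rfl
        linarith
      linarith
  · intro hx
    set c : Fin n → ℝ := fun i => ((G.neighborFinset i).card : ℝ) with hcdef
    set s : Fin n → ℝ := fun i => (∑ j ∈ G.neighborFinset i, x j) / c i - x i with hsdef
    set Sm : Fin n → ℝ := fun i => ∑ j ∈ G.neighborFinset i, dm i j with hSm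
    set Sp : Fin n → ℝ := fun i => ∑ j ∈ G.neighborFinset i, dp i j with hSp
    set v : Fin n → ℝ := fun i => max (-(c i) * (s i + ξ)) (Sm i) with hv
    have hSmSp : ∀ i, Sm i ≤ Sp i := fun i =>
      Finset.sum_le_sum fun j _ => hle i j
    have hLSp : ∀ i, -(c i) * (s i + ξ) ≤ Sp i := by
      intro i
      have h1 := (hx i).1
      have hci := hc i
      have : -(Sp i) / c i - ξ ≤ s i := h1
      have h2 : -(Sp i) ≤ c i * (s i + ξ) := by
        rw [div_sub' (ne_of_gt hci), div_le_iff₀ hci] at this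
        nlinarith
      nlinarith
    have hSmU : ∀ i, Sm i ≤ c i * (ξ - s i) := by
      intro i
      have h2 := (hx i).2
      have hci := hc i
      have : s i ≤ -(Sm i) / c i + ξ := h2
      have : s i - ξ ≤ -(Sm i) / c i := by linarith
      rw [le_div_iff₀ hci] at this
      nlinarith
    have hLU : ∀ i, -(c i) * (s i + ξ) ≤ c i * (ξ - s i) := by
      intro i
      have hci := hc i
      nlinarith [hξ]
    have hvmem : ∀ i, Sm i ≤ v i ∧ v i ≤ Sp i ∧
        -(c i) * (s i + ξ) ≤ v i ∧ v i ≤ c i * (ξ - s i) := by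
      intro i
      refine ⟨le_max_right _ _, max_le (hLSp i) (hSmSp i), le_max_left _ _,
        max_le (hLU i) (hSmU i)⟩
    have ht : ∀ i, ∃ t : ℝ, 0 ≤ t ∧ t ≤ 1 ∧ Sm i + t * (Sp i - Sm i) = v i := by
      intro i
      obtain ⟨h1, h2, _, _⟩ := hvmem i
      rcases eq_or_lt_of_le (hSmSp i) with heq | hlt
      · exact ⟨0, le_refl _, zero_le_one, by rw [← heq]; linarith⟩
      · refine ⟨(v i - Sm i) / (Sp i - Sm i), div_nonneg (by linarith) (by linarith),
          (div_le_one (by linarith)).mpr (by linarith), ?_⟩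
        rw [div_mul_cancel₀ _ (by linarith : Sp i - Sm i ≠ 0)]
        ring
    choose t ht0 ht1 htv using ht
    refine ⟨fun i j => dm i j + t i * (dp i j - dm i j), fun i j => ⟨?_, ?_⟩, ?_⟩
    · show dm i j ≤ dm i j + t i * (dp i j - dm i j)
      nlinarith [ht0 i, ht1 i, hle i j]
    · show dm i j + t i * (dp i j - dm i j) ≤ dp i j
      nlinarith [ht0 i, ht1 i, hle i j]
    · intro i
      have hsum : ∑ j ∈ G.neighborFinset i, (dm i j + t i * (dp i j - dm i j)) = v i := by
        rw [Finset.sum_add_distrib, ← Finset.mul_sum, Finset.sum_sub_distrib]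
        rw [← hSm, ← hSp] at *
        exact htv i
      rw [hsum]
      obtain ⟨_, _, hL, hU⟩ := hvmem i
      have hci := hc i
      constructor
      · have h1 : -(v i) ≤ (s i + ξ) * c i := by nlinarith
        have h2 : -(v i) / c i ≤ s i + ξ := (div_le_iff₀ hci).mpr (by nlinarith)
        linarith
      · have h1 : (s i - ξ) * c i ≤ -(v i) := by nlinarith
        have h2 : s i - ξ ≤ -(v i) / c i := (le_div_iff₀ hci).mpr h1
        linarith
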